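/- arXiv:2505.02605 — 7 statements merged into one kernel-verified Lean document; each statement's English description precedes it below -/
import Mathlib

section
/- Let G be a finite simple triangle-free graph and let W = {a¹, …, aᵗ, b} be a set of distinct vertices, maximal with respect to the property that the induced subgraph on W is a star centered at b (i.e., each aⁱ is adjacent to b and the aⁱ are pairwise nonadjacent). If A is a maximal independent set of the induced subgraph G \ N_G[W], then A ∪ {a¹, …, aᵗ} is a maximal independent set of G. -/
/-- `A` is an independent set of the simple graph `G`. -/
def IsIndep {V : Type*} (G : SimpleGraph V) (A : Set V) : Prop :=
  ∀ a ∈ A, ∀ b ∈ A, ¬ G.Adj a b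

/-- `A` is a maximal independent set of the induced subgraph of `G` on `S`. -/
def IsMaxIndepOn {V : Type*} (G : SimpleGraph V) (S A : Set V) : Prop :=
  A ⊆ S ∧ IsIndep G A ∧ ∀ B : Set V, B ⊆ S → IsIndep G B → A ⊆ B → B = A

/-- The closed neighborhood of a vertex. -/
def closedNbhd {V : Type*} (G : SimpleGraph V) (b : V) : Set V :=
  insert b (G.neighborSet b)

/-- In a triangle-free graph, if `W = {a¹,…,aᵗ,b}` is maximal such that the
induced subgraph on `W` is a star centered at `b`, and `A` is a maximal
independent set of `G \ N_G[W]`, then `A ∪ {a¹,…,aᵗ}` is a maximal independent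
set of `G`. -/
theorem maxIndep_of_maximal_star
    {V : Type*} [Fintype V] (G : SimpleGraph V)
    (hG : G.CliqueFree 3)
    {t : ℕ} (ht : 1 ≤ t) (a : Fin t → V) (b : V)
    (hinj : Function.Injective a) (hne : ∀ i, a i ≠ b)
    (hstar : ∀ i, G.Adj (a i) b)
    (hindep : ∀ i j, i ≠ j → ¬ G.Adj (a i) (a j))
    (hmax : ∀ v : V, v ∉ insert b (Set.range a) →
      ¬ (G.Adj v b ∧ ∀ i, ¬ G.Adj v (a i)))
    (A : Set V)
    (hA : IsMaxIndepOn G ((⋃ w ∈ insert b (Set.range a), closedNbhd G w))ᶜ A) :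
    IsMaxIndepOn G Set.univ (A ∪ Set.range a) := by

  obtain ⟨hAS, hAind, hAmax⟩ := hA
  -- key facts about A and the star vertices
  have hkey : ∀ x ∈ A, ∀ w ∈ insert b (Set.range a), x ≠ w ∧ ¬ G.Adj w x := by
    intro x hx w hw
    have h := hAS hx
    simp only [Set.mem_compl_iff, Set.mem_iUnion, not_exists] at h
    have h2 := h w hw
    simp only [closedNbhd, Set.mem_insert_iff, SimpleGraph.mem_neighborSet, not_or] at h2
    exact h2
  refine ⟨fun _ _ => trivial, ?_, ?_⟩
  · -- independence
    rintro u (hu | ⟨i, rfl⟩) v (hv | ⟨j, rfl⟩)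
    · exact hAind u hu v hv
    · intro hadj
      exact (hkey u hu (a j) (Set.mem_insert_of_mem _ ⟨j, rfl⟩)).2 hadj.symm
    · intro hadj
      exact (hkey v hv (a i) (Set.mem_insert_of_mem _ ⟨i, rfl⟩)).2 hadj
    · intro hadj
      rcases eq_or_ne i j with rfl | hij
      · exact G.irrefl hadj
      · exact hindep i j hij hadj
  · -- maximality
    intro B _ hBind hsub
    apply Set.Subset.antisymm _ hsub
    intro v hvB
    by_contra hv
    have hvA : v ∉ A := fun h => hv (Or.inl h)
    have hvr : v ∉ Set.range a := fun h => hv (Or.inr h)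
    have haB : ∀ i, a i ∈ B := fun i => hsub (Or.inr ⟨i, rfl⟩)
    have hvb : v ≠ b := by
      rintro rfl
      exact hBind v hvB (a ⟨0, ht⟩) (haB _) (hstar ⟨0, ht⟩).symm
    have hvna : ∀ i, ¬ G.Adj v (a i) := by
      intro i hadj
      exact hBind v hvB (a i) (haB i) hadj
    have hvnb : ¬ G.Adj v b := by
      intro hadj
      have hvW : v ∉ insert b (Set.range a) := by
        simp only [Set.mem_insert_iff, not_or]
        exact ⟨hvb, hvr⟩
      exact hmax v hvW ⟨hadj, hvna⟩
    -- v is in the complement of N[W]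
    have hvS : v ∈ ((⋃ w ∈ insert b (Set.range a), closedNbhd G w))ᶜ := by
      simp only [Set.mem_compl_iff, Set.mem_iUnion, not_exists]
      rintro w hw
      simp only [closedNbhd, Set.mem_insert_iff, SimpleGraph.mem_neighborSet, not_or]
      rcases hw with rfl | ⟨i, rfl⟩
      · exact ⟨hvb, fun h => hvnb h.symm⟩
      · exact ⟨fun h => hvr ⟨i, h.symm⟩, fun h => hvna i h.symm⟩
    have : A ∪ {v} = A := by
      apply hAmax
      · rintro x (hx | rfl)
        · exact hAS hx
        · exact hvS
      · rintro x (hx | rfl) y (hy | rfl)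
        · exact hAind x hx y hy
        · exact hBind x (hsub (Or.inl hx)) y hvB
        · exact hBind x hvB y (hsub (Or.inl hy))
        · exact fun h => G.irrefl h
      · exact Set.subset_union_left
    exact hvA (this ▸ (Set.mem_union_right A rfl : v ∈ A ∪ {v}))
end

section
/- Let G be a finite simple triangle-free unmixed graph, and let W = {a¹, …, aᵗ, b} induce a star centered at b that is maximal among induced stars of G. Then α(G \ N_G[W]) = α(G) − t. -/
/-- The independence number of the induced subgraph of `G` on `S`. -/
noncomputable def indepNumOn {V : Type*} [Fintype V] (G : SimpleGraph V) (S : Set V) : ℕ :=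
  sSup {n : ℕ | ∃ A : Set V, A ⊆ S ∧ IsIndep G A ∧ A.ncard = n}

/-- `G` is unmixed: all maximal independent sets have the same cardinality. -/
def Unmixed {V : Type*} (G : SimpleGraph V) : Prop :=
  ∀ A B : Set V, IsMaxIndepOn G Set.univ A → IsMaxIndepOn G Set.univ B →
    A.ncard = B.ncard

/-- Any independent set contained in `S` extends to a maximal independent set on `S`. -/
lemma exists_maxIndepOn {V : Type*} [Fintype V] (G : SimpleGraph V) (S A : Set V)
    (hAS : A ⊆ S) (hA : IsIndep G A) :
    ∃ C, A ⊆ C ∧ IsMaxIndepOn G S C := by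
  set T : Set ℕ := {n : ℕ | ∃ C : Set V, A ⊆ C ∧ C ⊆ S ∧ IsIndep G C ∧ C.ncard = n} with hT
  have hne : T.Nonempty := ⟨A.ncard, A, subset_rfl, hAS, hA, rfl⟩
  have hbdd : BddAbove T := by
    refine ⟨Fintype.card V, ?_⟩
    rintro n ⟨C, -, -, -, rfl⟩
    simpa [Set.ncard_univ] using Set.ncard_le_ncard (Set.subset_univ C) Set.finite_univ
  obtain ⟨C, hAC, hCS, hCind, hCcard⟩ := Nat.sSup_mem hne hbdd
  refine ⟨C, hAC, hCS, hCind, ?_⟩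
  intro B hBS hBind hCB
  have hle : B.ncard ≤ sSup T := le_csSup hbdd ⟨B, hAC.trans hCB, hBS, hBind, rfl⟩
  exact (Set.eq_of_subset_of_ncard_le hCB (hCcard ▸ hle) (Set.toFinite B)).symm

/-- The independence number on `S` is attained and is an upper bound. -/
lemma indepNumOn_spec {V : Type*} [Fintype V] (G : SimpleGraph V) (S : Set V) :
    (∃ A : Set V, A ⊆ S ∧ IsIndep G A ∧ A.ncard = indepNumOn G S) ∧
      ∀ A : Set V, A ⊆ S → IsIndep G A → A.ncard ≤ indepNumOn G S := by
  set T : Set ℕ := {n : ℕ | ∃ A : Set V, A ⊆ S ∧ IsIndep G A ∧ A.ncard = n} with hT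
  have hne : T.Nonempty := ⟨0, ∅, Set.empty_subset S, by intro x hx; simp at hx, by simp⟩
  have hbdd : BddAbove T := by
    refine ⟨Fintype.card V, ?_⟩
    rintro n ⟨C, -, -, rfl⟩
    simpa [Set.ncard_univ] using Set.ncard_le_ncard (Set.subset_univ C) Set.finite_univ
  constructor
  · exact Nat.sSup_mem hne hbdd
  · intro A hAS hA
    exact le_csSup hbdd ⟨A, hAS, hA, rfl⟩

/-- If `G` is triangle-free and unmixed and `W = {a¹,…,aᵗ,b}` induces a star
centered at `b` that is maximal among induced stars of `G`, then
`α(G \ N_G[W]) = α(G) - t`. -/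
theorem indepNum_of_maximal_star_unmixed
    {V : Type*} [Fintype V] (G : SimpleGraph V)
    (hG : G.CliqueFree 3) (hU : Unmixed G)
    {t : ℕ} (ht : 1 ≤ t) (a : Fin t → V) (b : V)
    (hinj : Function.Injective a) (hne : ∀ i, a i ≠ b)
    (hstar : ∀ i, G.Adj (a i) b)
    (hindep : ∀ i j, i ≠ j → ¬ G.Adj (a i) (a j))
    (hmax : ∀ v : V, v ∉ insert b (Set.range a) →
      ¬ (G.Adj v b ∧ ∀ i, ¬ G.Adj v (a i))) :
    indepNumOn G ((⋃ w ∈ insert b (Set.range a), closedNbhd G w))ᶜ =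
      indepNumOn G Set.univ - t := by
  set S : Set V := ((⋃ w ∈ insert b (Set.range a), closedNbhd G w))ᶜ with hS
  -- every `a i` lies outside `S`
  have hmemN : ∀ i, a i ∈ (⋃ w ∈ insert b (Set.range a), closedNbhd G w) := by
    intro i
    refine Set.mem_biUnion (Set.mem_insert_iff.2 (Or.inr ⟨i, rfl⟩)) ?_
    exact Set.mem_insert _ _
  have hanotS : ∀ i, a i ∉ S := fun i hi => hi (hmemN i)
  -- vertices of `S` are non-adjacent to each `a i`
  have hSadj : ∀ v ∈ S, ∀ i, ¬ G.Adj v (a i) := by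
    intro v hv i hadj
    exact hv (Set.mem_biUnion (Set.mem_insert_iff.2 (Or.inr ⟨i, rfl⟩))
      (Set.mem_insert_iff.2 (Or.inr hadj.symm)))
  -- key: every maximal independent set `B` of `S` satisfies `α(G) = |B| + t`
  have key : ∀ B : Set V, IsMaxIndepOn G S B → indepNumOn G Set.univ = B.ncard + t := by
    intro B hB
    set C : Set V := B ∪ Set.range a with hC
    have hdisj : Disjoint B (Set.range a) := by
      rw [Set.disjoint_right]
      rintro x ⟨i, rfl⟩ hxB
      exact hanotS i (hB.1 hxB)
    have hCcard : C.ncard = B.ncard + t := by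
      rw [hC, Set.ncard_union_eq hdisj (Set.toFinite B) (Set.toFinite _)]
      congr 1
      rw [← Nat.card_coe_set_eq, Nat.card_range_of_injective hinj]
      simp
    have hCind : IsIndep G C := by
      rintro x (hx | ⟨i, rfl⟩) y (hy | ⟨j, rfl⟩)
      · exact hB.2.1 x hx y hy
      · exact hSadj x (hB.1 hx) j
      · intro h; exact hSadj y (hB.1 hy) i h.symm
      · by_cases hij : i = j
        · subst hij; exact G.irrefl
        · exact hindep i j hij
    have hCmax : IsMaxIndepOn G Set.univ C := by
      refine ⟨Set.subset_univ C, hCind, ?_⟩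
      intro D _ hDind hCD
      refine Set.Subset.antisymm ?_ hCD
      intro v hv
      by_contra hvC
      have haD : ∀ i, a i ∈ D := fun i => hCD (Or.inr ⟨i, rfl⟩)
      by_cases hvS : v ∈ S
      · -- extend `B` inside `S`, contradicting maximality of `B`
        have hBv : B ∪ {v} = B := by
          refine hB.2.2 (B ∪ {v}) ?_ ?_ Set.subset_union_left
          · rintro x (hx | rfl)
            · exact hB.1 hx
            · exact hvS
          · intro x hx y hy
            have hxD : x ∈ D := by
              rcases hx with hx | rfl
              · exact hCD (Or.inl hx)
              · exact hv
            have hyD : y ∈ D := by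
              rcases hy with hy | rfl
              · exact hCD (Or.inl hy)
              · exact hv
            exact hDind x hxD y hyD
        have : v ∈ B := hBv ▸ (Or.inr rfl : v ∈ B ∪ {v})
        exact hvC (Or.inl this)
      · -- `v` is in some closed neighborhood
        have hvN : v ∈ ⋃ w ∈ insert b (Set.range a), closedNbhd G w := by
          simp only [hS, Set.mem_compl_iff, not_not] at hvS
          exact hvS
        simp only [Set.mem_iUnion, exists_prop] at hvN
        obtain ⟨w, hw, hvw⟩ := hvN
        simp only [closedNbhd, Set.mem_insert_iff, SimpleGraph.mem_neighborSet] at hvw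
        rcases hvw with rfl | hadj
        · -- v = w
          rcases hw with rfl | ⟨i, rfl⟩
          · -- v = b : adjacent to a 0
            exact hDind (a ⟨0, ht⟩) (haD _) v hv (hstar ⟨0, ht⟩)
          · exact hvC (Or.inr ⟨i, rfl⟩)
        · -- G.Adj w v
          rcases hw with rfl | ⟨i, rfl⟩
          · -- w = b, so v adj b
            have hvb : G.Adj v w := hadj.symm
            have hvW : v ∉ insert w (Set.range a) := by
              rintro (rfl | ⟨i, rfl⟩)
              · exact G.irrefl hvb
              · exact hvC (Or.inr ⟨i, rfl⟩)
            have := hmax v hvW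
            push_neg at this
            obtain ⟨i, hi⟩ := this hvb
            exact hDind v hv (a i) (haD i) hi
          · exact hDind (a i) (haD i) v hv hadj
    -- now use unmixedness together with a maximum independent set of `G`
    obtain ⟨⟨M, hMsub, hMind, hMcard⟩, hMub⟩ := indepNumOn_spec G (Set.univ : Set V)
    obtain ⟨M', hMM', hM'max⟩ := exists_maxIndepOn G Set.univ M hMsub hMind
    have h1 : M.ncard ≤ M'.ncard := Set.ncard_le_ncard hMM' (Set.toFinite M')
    have h2 : M'.ncard ≤ indepNumOn G Set.univ := hMub M' hM'max.1 hM'max.2.1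
    have h3 : M'.ncard = indepNumOn G Set.univ := le_antisymm h2 (hMcard ▸ h1)
    have h4 : M'.ncard = C.ncard := hU M' C hM'max hCmax
    rw [← h3, h4, hCcard]
  -- conclude
  obtain ⟨⟨A, hAsub, hAind, hAcard⟩, hAub⟩ := indepNumOn_spec G S
  obtain ⟨B, hAB, hBmax⟩ := exists_maxIndepOn G S A hAsub hAind
  have h1 : A.ncard ≤ B.ncard := Set.ncard_le_ncard hAB (Set.toFinite B)
  have h2 : B.ncard ≤ indepNumOn G S := hAub B hBmax.1 hBmax.2.1
  have h3 : B.ncard = indepNumOn G S := le_antisymm h2 (hAcard ▸ h1)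
  have h4 := key B hBmax
  omega
end

section
/- Let G be a finite simple graph, U a subset of V(G), A a maximal independent set of the induced subgraph G \ U, and let U_A = {v ∈ U : N_G(v) ∩ A = ∅}. Suppose U' ⊆ U_A and B is a maximal independent set of the induced subgraph of G on U_A \ U'. Then A ∪ B is a maximal independent set of the induced subgraph G \ U'. -/
/-- Claim 1: if `A` is a maximal independent set of `G \ U`,
`U_A = {v ∈ U : N_G(v) ∩ A = ∅}`, `U' ⊆ U_A` and `B` is a maximal independent
set of the induced subgraph on `U_A \ U'`, then `A ∪ B` is a maximal
independent set of `G \ U'`. -/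
theorem maxIndep_union_of_maxIndep_pieces
    {V : Type*} [Fintype V] (G : SimpleGraph V) (U U' A B : Set V)
    (hA : IsMaxIndepOn G Uᶜ A)
    (hU' : U' ⊆ {v ∈ U | G.neighborSet v ∩ A = ∅})
    (hB : IsMaxIndepOn G ({v ∈ U | G.neighborSet v ∩ A = ∅} \ U') B) :
    IsMaxIndepOn G U'ᶜ (A ∪ B) := by
  obtain ⟨hAsub, hAind, hAmax⟩ := hA
  obtain ⟨hBsub, hBind, hBmax⟩ := hB
  -- no vertex of B is adjacent to a vertex of A
  have hcross : ∀ b ∈ B, ∀ a ∈ A, ¬ G.Adj b a := by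
    intro b hb a ha hadj
    have hbUA := hBsub hb
    have : a ∈ G.neighborSet b ∩ A := ⟨hadj, ha⟩
    rw [hbUA.1.2] at this
    exact this
  refine ⟨?_, ?_, ?_⟩
  · intro x hx
    rcases hx with hx | hx
    · intro hxU'
      exact hAsub hx (hU' hxU').1
    · exact (hBsub hx).2
  · intro a ha b hb hadj
    rcases ha with ha | ha <;> rcases hb with hb | hb
    · exact hAind a ha b hb hadj
    · exact hcross b hb a ha hadj.symm
    · exact hcross a ha b hb hadj
    · exact hBind a ha b hb hadj
  · intro C hCsub hCind hABC
    have hCA : C ∩ Uᶜ = A := by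
      apply hAmax
      · exact Set.inter_subset_right
      · intro a ha b hb; exact hCind a ha.1 b hb.1
      · intro a ha; exact ⟨hABC (Or.inl ha), hAsub ha⟩
    have hCB : C ∩ ({v ∈ U | G.neighborSet v ∩ A = ∅} \ U') = B := by
      apply hBmax
      · exact Set.inter_subset_right
      · intro a ha b hb; exact hCind a ha.1 b hb.1
      · intro b hb; exact ⟨hABC (Or.inr hb), hBsub hb⟩
    ext c
    constructor
    · intro hc
      by_cases hcU : c ∈ U
      · right
        rw [← hCB]
        refine ⟨hc, ⟨hcU, ?_⟩, hCsub hc⟩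
        ext a
        simp only [Set.mem_inter_iff, Set.mem_empty_iff_false, iff_false]
        rintro ⟨hadj, haA⟩
        exact hCind c hc a (hABC (Or.inl haA)) hadj
      · left; rw [← hCA]; exact ⟨hc, hcU⟩
    · exact fun hc => hABC hc
end

section
/- Let G be a finite simple graph on vertex set V, and for a monomial-ideal-free formulation define a subset σ ⊆ V×{1,2} to be admissible if it contains no set of the form {(a,1),(a,2),(b,1),(b,2)} with {a,b} ∈ E(G), no set {(a,1),(b,1),(b,2),(c,1)} with {a,b},{b,c} ∈ E(G) and a ≠ c, and no set {(a,1),(b,1),(c,1),(d,1)} with {a,b},{c,d} ∈ E(G) disjoint edges. Then for every maximal independent set A of G, the set (A×{1}) ∪ (V×{2}) is a maximal admissible set. -/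
/-- `σ ⊆ V × {0,1}` is admissible: it avoids the three forbidden
configurations corresponding to the minimal generators `a₁a₂b₁b₂`,
`a₁b₁b₂c₁`, `a₁b₁c₁d₁` of the polarization of `I(G)²`. -/
def Admissible {V : Type*} (G : SimpleGraph V) (σ : Set (V × Fin 2)) : Prop :=
  (∀ a b : V, G.Adj a b →
    ¬ ((a, 0) ∈ σ ∧ (a, 1) ∈ σ ∧ (b, 0) ∈ σ ∧ (b, 1) ∈ σ)) ∧
  (∀ a b c : V, G.Adj a b → G.Adj b c → a ≠ c →
    ¬ ((a, 0) ∈ σ ∧ (b, 0) ∈ σ ∧ (b, 1) ∈ σ ∧ (c, 0) ∈ σ)) ∧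
  (∀ a b c d : V, G.Adj a b → G.Adj c d →
    a ≠ c → a ≠ d → b ≠ c → b ≠ d →
    ¬ ((a, 0) ∈ σ ∧ (b, 0) ∈ σ ∧ (c, 0) ∈ σ ∧ (d, 0) ∈ σ))

/-- `σ` is a maximal admissible set. -/
def MaximalAdmissible {V : Type*} (G : SimpleGraph V) (σ : Set (V × Fin 2)) : Prop :=
  Admissible G σ ∧ ∀ τ : Set (V × Fin 2), Admissible G τ → σ ⊆ τ → τ = σ

/-- For every maximal independent set `A` of `G`, the set
`(A × {1}) ∪ (V × {2})` is a maximal admissible set (independent type facet). -/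
theorem maximalAdmissible_of_maxIndep
    {V : Type*} [Fintype V] (G : SimpleGraph V) (A : Set V)
    (hA : IsMaxIndepOn G Set.univ A) :
    MaximalAdmissible G
      ((A ×ˢ ({0} : Set (Fin 2))) ∪ ((Set.univ : Set V) ×ˢ ({1} : Set (Fin 2)))) := by

  obtain ⟨-, hInd, hMax⟩ := hA
  set σ : Set (V × Fin 2) :=
    ((A ×ˢ ({0} : Set (Fin 2))) ∪ ((Set.univ : Set V) ×ˢ ({1} : Set (Fin 2)))) with hσ
  have mem0 : ∀ x : V, (x, (0 : Fin 2)) ∈ σ ↔ x ∈ A := by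
    intro x; simp [hσ, Set.mem_prod]
  have mem1 : ∀ x : V, (x, (1 : Fin 2)) ∈ σ := by
    intro x; simp [hσ, Set.mem_prod]
  constructor
  · refine ⟨?_, ?_, ?_⟩
    · intro a b hab ⟨h1, _, h3, _⟩
      exact hInd a ((mem0 a).1 h1) b ((mem0 b).1 h3) hab
    · intro a b c hab _ _ ⟨h1, h2, _, _⟩
      exact hInd a ((mem0 a).1 h1) b ((mem0 b).1 h2) hab
    · intro a b c d hab _ _ _ _ _ ⟨h1, h2, _, _⟩
      exact hInd a ((mem0 a).1 h1) b ((mem0 b).1 h2) hab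
  · intro τ hτ hsub
    apply Set.eq_of_subset_of_subset _ hsub
    rintro ⟨x, i⟩ hx
    fin_cases i
    · show (x, (0 : Fin 2)) ∈ σ
      rw [mem0]
      by_contra hxA
      have hni : ¬ IsIndep G (insert x A) := by
        intro h
        have := hMax (insert x A) (Set.subset_univ _) h (Set.subset_insert _ _)
        exact hxA (this ▸ Set.mem_insert x A)
      unfold IsIndep at hni
      push_neg at hni
      obtain ⟨a, ha, b, hb, hab⟩ := hni
      rcases Set.mem_insert_iff.1 ha with hax | ha'
      · subst hax
        rcases Set.mem_insert_iff.1 hb with hbx | hb'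
        · subst hbx; exact (G.loopless.irrefl b hab).elim
        · exact hτ.1 a b hab ⟨hx, hsub (mem1 a), hsub ((mem0 b).2 hb'), hsub (mem1 b)⟩
      · rcases Set.mem_insert_iff.1 hb with hbx | hb'
        · subst hbx
          exact hτ.1 b a hab.symm ⟨hx, hsub (mem1 b), hsub ((mem0 a).2 ha'), hsub (mem1 a)⟩
        · exact hInd a ha' b hb' hab
    · show (x, (1 : Fin 2)) ∈ σ
      exact mem1 x
end

section
/- Let G be a finite simple graph on vertex set V, with admissible subsets of V×{1,2} defined as those avoiding: {(a,1),(a,2),(b,1),(b,2)} for an edge {a,b}; {(a,1),(b,1),(b,2),(c,1)} for edges {a,b},{b,c} with a ≠ c; and {(a,1),(b,1),(c,1),(d,1)} for disjoint edges {a,b},{c,d}. Suppose {a,b} is a leaf edge of G with free vertex a, and A is a maximal independent set of G \ N_G[b]. Then σ = ({a,b} ∪ A)×{1} ∪ (V \ {a})×{2} is a maximal admissible set. -/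
/-- Leaf type facets: if `{a,b}` is a leaf edge of `G` with free vertex `a`
(the unique neighbor of `a` is `b`) and `A` is a maximal independent set of
`G \ N_G[b]`, then `σ = ({a,b} ∪ A) × {1} ∪ (V \ {a}) × {2}` is a maximal
admissible set. -/
theorem maximalAdmissible_leaf_type
    {V : Type*} [Fintype V] (G : SimpleGraph V) (a b : V)
    (hleaf : G.neighborSet a = {b}) (A : Set V)
    (hA : IsMaxIndepOn G (closedNbhd G b)ᶜ A) :
    MaximalAdmissible G
      ((({a, b} ∪ A) ×ˢ ({0} : Set (Fin 2))) ∪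
        ((({a} : Set V)ᶜ) ×ˢ ({1} : Set (Fin 2)))) := by
  classical
  have hab : G.Adj a b := by
    have hb : b ∈ G.neighborSet a := by rw [hleaf]; rfl
    exact hb
  have hane : a ≠ b := hab.ne
  obtain ⟨hAS, hAind, hAmax⟩ := hA
  have haA : a ∉ A := by
    intro h
    exact hAS h (by simp [closedNbhd, SimpleGraph.mem_neighborSet, hab.symm])
  have hbA : b ∉ A := by
    intro h; exact hAS h (by simp [closedNbhd])
  have hAnb : ∀ u ∈ A, ¬ G.Adj b u := by
    intro u hu hadj
    exact hAS hu (by simp [closedNbhd, SimpleGraph.mem_neighborSet, hadj])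
  set S : Set V := {a, b} ∪ A with hS
  have haS : a ∈ S := Or.inl (Or.inl rfl)
  have hbS : b ∈ S := Or.inl (Or.inr rfl)
  have hedge : ∀ x ∈ S, ∀ y ∈ S, G.Adj x y → (x = a ∧ y = b) ∨ (x = b ∧ y = a) := by
    intro x hx y hy hxy
    rcases hx with (rfl | rfl) | hx
    · have hmem : y ∈ G.neighborSet x := hxy
      rw [hleaf] at hmem
      exact Or.inl ⟨rfl, hmem⟩
    · rcases hy with (rfl | rfl) | hy
      · exact Or.inr ⟨rfl, rfl⟩
      · exact absurd rfl hxy.ne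
      · exact absurd hxy (hAnb y hy)
    · rcases hy with (rfl | rfl) | hy
      · have hmem : x ∈ G.neighborSet y := hxy.symm
        rw [hleaf] at hmem
        have hxb : x = b := hmem
        exact absurd (hxb ▸ hx) hbA
      · exact absurd hxy.symm (hAnb x hx)
      · exact absurd hxy (hAind x hx y hy)
  have mem0 : ∀ v : V, ((v, (0 : Fin 2)) ∈
      (S ×ˢ ({0} : Set (Fin 2)) ∪ (({a} : Set V)ᶜ) ×ˢ ({1} : Set (Fin 2)))) ↔ v ∈ S := by
    intro v; simp
  have mem1 : ∀ v : V, ((v, (1 : Fin 2)) ∈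
      (S ×ˢ ({0} : Set (Fin 2)) ∪ (({a} : Set V)ᶜ) ×ˢ ({1} : Set (Fin 2)))) ↔ v ≠ a := by
    intro v; simp
  constructor
  · refine ⟨?_, ?_, ?_⟩
    · rintro x y hxy ⟨h1, h2, h3, h4⟩
      rw [mem0] at h1 h3
      rw [mem1] at h2 h4
      rcases hedge x h1 y h3 hxy with ⟨hxa, _⟩ | ⟨_, hya⟩
      · exact h2 hxa
      · exact h4 hya
    · rintro x y z hxy hyz hxz ⟨h1, h2, h3, h4⟩
      rw [mem0] at h1 h2 h4
      rw [mem1] at h3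
      rcases hedge x h1 y h2 hxy with ⟨hxa, hyb⟩ | ⟨_, hya⟩
      · rcases hedge y h2 z h4 hyz with ⟨hya, _⟩ | ⟨_, hza⟩
        · exact hane (hya.symm.trans hyb)
        · exact hxz (hxa.trans hza.symm)
      · exact h3 hya
    · rintro x y z w hxy hzw hxz hxw hyz hyw ⟨h1, h2, h3, h4⟩
      rw [mem0] at h1 h2 h3 h4
      rcases hedge x h1 y h2 hxy with ⟨hx2, hy2⟩ | ⟨hx2, hy2⟩ <;>
        rcases hedge z h3 w h4 hzw with ⟨hz2, hw2⟩ | ⟨hz2, hw2⟩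
      · exact hxz (hx2.trans hz2.symm)
      · exact hyz (hy2.trans hz2.symm)
      · exact hyz (hy2.trans hz2.symm)
      · exact hxz (hx2.trans hz2.symm)
  · intro τ hτ hsub
    obtain ⟨hτ1, hτ2, hτ3⟩ := hτ
    have ha0 : (a, (0 : Fin 2)) ∈ τ := hsub ((mem0 a).2 haS)
    have hb0 : (b, (0 : Fin 2)) ∈ τ := hsub ((mem0 b).2 hbS)
    have hb1 : (b, (1 : Fin 2)) ∈ τ := hsub ((mem1 b).2 (Ne.symm hane))
    ext ⟨v, i⟩
    constructor
    · intro hv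
      have hi : i = 0 ∨ i = 1 := by omega
      rcases hi with rfl | rfl
      · rw [mem0]
        by_contra hvS
        have hva : v ≠ a := fun h => hvS (h ▸ haS)
        have hvb : v ≠ b := fun h => hvS (h ▸ hbS)
        by_cases hadj : G.Adj b v
        · exact hτ2 v b a hadj.symm hab.symm hva ⟨hv, hb0, hb1, ha0⟩
        · have hvC : v ∈ (closedNbhd G b)ᶜ := by
            simp [closedNbhd, SimpleGraph.mem_neighborSet]
            exact ⟨hvb, hadj⟩
          have hBne : insert v A ≠ A := by
            intro h
            exact hvS (Or.inr (h ▸ Set.mem_insert v A))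
          have hnind : ¬ IsIndep G (insert v A) := by
            intro hind
            refine hBne (hAmax _ ?_ hind (Set.subset_insert v A))
            intro u hu
            rcases hu with rfl | hu
            · exact hvC
            · exact hAS hu
          rw [IsIndep] at hnind
          push_neg at hnind
          obtain ⟨x, hx, y, hy, hxy⟩ := hnind
          rcases hx with rfl | hx <;> rcases hy with rfl | hy
          · exact hxy.ne rfl
          · have hy0 : (y, (0 : Fin 2)) ∈ τ := hsub ((mem0 y).2 (Or.inr hy))
            exact hτ3 x y a b hxy hab hva hvb
              (fun h => haA (h ▸ hy)) (fun h => hbA (h ▸ hy)) ⟨hv, hy0, ha0, hb0⟩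
          · have hx0 : (x, (0 : Fin 2)) ∈ τ := hsub ((mem0 x).2 (Or.inr hx))
            exact hτ3 y x a b hxy.symm hab hva hvb
              (fun h => haA (h ▸ hx)) (fun h => hbA (h ▸ hx)) ⟨hv, hx0, ha0, hb0⟩
          · exact hAind x hx y hy hxy
      · rw [mem1]
        intro hva2
        rw [hva2] at hv
        exact hτ1 a b hab ⟨ha0, hv, hb0, hb1⟩
    · exact fun h => hsub h
end

section
/- Let G be a finite simple graph on vertex set V, with admissible subsets of V×{1,2} as defined by the three forbidden configurations (edge-square, star, matching). Suppose W = {a,b,c} induces a triangle in G and A is a maximal independent set of G \ N_G[W]. Then σ = (W ∪ A)×{1} ∪ (V \ W)×{2} is a maximal admissible set. -/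
lemma four_in_three {α : Type*} {a b c p q r s : α}
    (hp : p = a ∨ p = b ∨ p = c) (hq : q = a ∨ q = b ∨ q = c)
    (hr : r = a ∨ r = b ∨ r = c) (hs : s = a ∨ s = b ∨ s = c)
    (hpq : p ≠ q) (hpr : p ≠ r) (hps : p ≠ s)
    (hqr : q ≠ r) (hqs : q ≠ s) (hrs : r ≠ s) : False := by
  rcases hp with rfl | rfl | rfl <;> rcases hq with rfl | rfl | rfl <;>
    rcases hr with rfl | rfl | rfl <;> rcases hs with rfl | rfl | rfl <;>
    simp_all

/-- Triangle type facets: if `W = {a,b,c}` induces a triangle in `G` and `A`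
is a maximal independent set of `G \ N_G[W]`, then
`σ = (W ∪ A) × {1} ∪ (V \ W) × {2}` is a maximal admissible set. -/
theorem maximalAdmissible_triangle_type
    {V : Type*} [Fintype V] (G : SimpleGraph V) (a b c : V)
    (hab : G.Adj a b) (hbc : G.Adj b c) (hac : G.Adj a c) (A : Set V)
    (hA : IsMaxIndepOn G ((⋃ w ∈ ({a, b, c} : Set V), closedNbhd G w))ᶜ A) :
    MaximalAdmissible G
      (((({a, b, c} : Set V) ∪ A) ×ˢ ({0} : Set (Fin 2))) ∪
        ((({a, b, c} : Set V)ᶜ) ×ˢ ({1} : Set (Fin 2)))) := by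
  obtain ⟨hAS, hAind, hAmax⟩ := hA
  set W : Set V := {a, b, c} with hWdef
  set S : Set V := ⋃ w ∈ W, closedNbhd G w with hSdef
  set σ : Set (V × Fin 2) := ((W ∪ A) ×ˢ ({0} : Set (Fin 2))) ∪
      ((Wᶜ) ×ˢ ({1} : Set (Fin 2))) with hσdef
  -- vertices in A are far from W
  have hfar : ∀ x ∈ A, ∀ w ∈ W, x ≠ w ∧ ¬ G.Adj w x := by
    intro x hx w hw
    have hxS : x ∉ S := hAS hx
    constructor
    · rintro rfl
      exact hxS (Set.mem_biUnion hw (Set.mem_insert _ _))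
    · intro hadj
      exact hxS (Set.mem_biUnion hw (Set.mem_insert_of_mem _ hadj))
  have hWS : W ⊆ S := fun w hw => Set.mem_biUnion hw (Set.mem_insert _ _)
  have mem0 : ∀ v : V, ((v, (0 : Fin 2)) ∈ σ) ↔ v ∈ W ∪ A := by
    intro v
    simp [hσdef, Set.mem_prod]
  have mem1 : ∀ v : V, ((v, (1 : Fin 2)) ∈ σ) ↔ v ∈ Wᶜ := by
    intro v
    simp [hσdef, Set.mem_prod]
  -- edges inside W ∪ A go between W vertices
  have edgeW : ∀ x ∈ W ∪ A, ∀ y ∈ W ∪ A, G.Adj x y → x ∈ W ∧ y ∈ W := by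
    rintro x (hx | hx) y (hy | hy) hadj
    · exact ⟨hx, hy⟩
    · exact absurd hadj (hfar y hy x hx).2
    · exact absurd hadj.symm (hfar x hx y hy).2
    · exact absurd hadj (hAind x hx y hy)
  have hadm : Admissible G σ := by
    refine ⟨?_, ?_, ?_⟩
    · intro x y hxy ⟨hx0, hx1, hy0, hy1⟩
      rw [mem0] at hx0 hy0; rw [mem1] at hx1 hy1
      have hx : x ∈ A := hx0.resolve_left hx1
      have hy : y ∈ A := hy0.resolve_left hy1
      exact hAind x hx y hy hxy
    · intro x y z hxy hyz hxz ⟨hx0, hy0, hy1, hz0⟩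
      rw [mem0] at hx0 hy0; rw [mem1] at hy1
      have hy : y ∈ A := hy0.resolve_left hy1
      rcases hx0 with hx | hx
      · exact (hfar y hy x hx).2 hxy
      · exact hAind x hx y hy hxy
    · intro p q r s h1 h2 hpr hps hqr hqs ⟨hp, hq, hr, hs⟩
      rw [mem0] at hp hq hr hs
      obtain ⟨hpW, hqW⟩ := edgeW p hp q hq h1
      obtain ⟨hrW, hsW⟩ := edgeW r hr s hs h2
      have hpq := h1.ne
      have hrs := h2.ne
      simp only [hWdef, Set.mem_insert_iff, Set.mem_singleton_iff] at hpW hqW hrW hsW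
      exact four_in_three hpW hqW hrW hsW hpq hpr hps hqr hqs hrs
  refine ⟨hadm, ?_⟩
  intro τ hτ hsub
  refine subset_antisymm ?_ hsub
  rintro ⟨v, i⟩ hvτ
  have hi : i = 0 ∨ i = 1 := by omega
  have haW : a ∈ W := Set.mem_insert _ _
  have hbW : b ∈ W := Set.mem_insert_of_mem _ (Set.mem_insert _ _)
  have hcW : c ∈ W := Set.mem_insert_of_mem _ (Set.mem_insert_of_mem _ rfl)
  have ha0 : ((a, (0 : Fin 2)) : V × Fin 2) ∈ τ := hsub ((mem0 a).2 (Or.inl haW))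
  have hb0 : ((b, (0 : Fin 2)) : V × Fin 2) ∈ τ := hsub ((mem0 b).2 (Or.inl hbW))
  have hc0 : ((c, (0 : Fin 2)) : V × Fin 2) ∈ τ := hsub ((mem0 c).2 (Or.inl hcW))
  rcases hi with rfl | rfl
  · -- level 0 : show v ∈ W ∪ A
    rw [mem0]
    by_contra hv
    rw [Set.mem_union] at hv
    push_neg at hv
    obtain ⟨hvW, hvA⟩ := hv
    have hv1 : ((v, (1 : Fin 2)) : V × Fin 2) ∈ τ := hsub ((mem1 v).2 hvW)
    have hvna : v ≠ a := fun h => hvW (h ▸ haW)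
    have hvnb : v ≠ b := fun h => hvW (h ▸ hbW)
    have hvnc : v ≠ c := fun h => hvW (h ▸ hcW)
    by_cases hvS : v ∈ S
    · -- v is adjacent to some vertex of W
      rw [hSdef, Set.mem_iUnion₂] at hvS
      obtain ⟨w, hw, hvw⟩ := hvS
      rcases hvw with h | h
      · exact (by rcases hw with rfl | rfl | rfl <;> [exact hvna h; exact hvnb h; exact hvnc h])
      · have hadj : G.Adj v w := h.symm
        rcases hw with h' | h' | h' <;> rw [h'] at hadj
        · exact hτ.2.2 v a b c hadj hbc hvnb hvnc hab.ne hac.ne ⟨hvτ, ha0, hb0, hc0⟩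
        · exact hτ.2.2 v b a c hadj hac hvna hvnc hab.ne.symm hbc.ne ⟨hvτ, hb0, ha0, hc0⟩
        · exact hτ.2.2 v c a b hadj hab hvna hvnb hac.ne.symm hbc.ne.symm ⟨hvτ, hc0, ha0, hb0⟩
    · -- v could be added to A, contradicting maximality
      have hBsub : insert v A ⊆ Sᶜ := by
        rintro x (rfl | hx)
        · exact hvS
        · exact hAS hx
      have hBni : ¬ IsIndep G (insert v A) := by
        intro hind
        have := hAmax (insert v A) hBsub hind (Set.subset_insert _ _)
        exact hvA (this ▸ Set.mem_insert v A)
      rw [IsIndep] at hBni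
      push_neg at hBni
      obtain ⟨x, hx, y, hy, hxy⟩ := hBni
      have key : ∃ u ∈ A, G.Adj v u := by
        rcases hx with rfl | hx
        · rcases hy with rfl | hy
          · exact absurd hxy G.irrefl
          · exact ⟨y, hy, hxy⟩
        · rcases hy with rfl | hy
          · exact ⟨x, hx, hxy.symm⟩
          · exact absurd hxy (hAind x hx y hy)
      obtain ⟨u, huA, hvu⟩ := key
      have huW : u ∈ Wᶜ := fun h => (hfar u huA u h).1 rfl
      have hu0 : ((u, (0 : Fin 2)) : V × Fin 2) ∈ τ := hsub ((mem0 u).2 (Or.inr huA))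
      have hu1 : ((u, (1 : Fin 2)) : V × Fin 2) ∈ τ := hsub ((mem1 u).2 huW)
      exact hτ.1 v u hvu ⟨hvτ, hv1, hu0, hu1⟩
  · -- level 1 : show v ∈ Wᶜ
    rw [mem1]
    intro hvW
    have hv0 : ((v, (0 : Fin 2)) : V × Fin 2) ∈ τ := hsub ((mem0 v).2 (Or.inl hvW))
    rcases hvW with rfl | rfl | rfl
    · exact hτ.2.1 b v c hab.symm hac hbc.ne ⟨hb0, hv0, hvτ, hc0⟩
    · exact hτ.2.1 a v c hab hbc hac.ne ⟨ha0, hv0, hvτ, hc0⟩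
    · exact hτ.2.1 a v b hac hbc.symm hab.ne ⟨ha0, hv0, hvτ, hb0⟩
end

section
/- Let G be a finite simple triangle-free graph, x and y adjacent vertices, U = N_G[x] ∪ N_G[y], A a maximal independent set of G \ U, and U_A = {v ∈ U : N_G(v) ∩ A = ∅}. Then in the induced subgraph of G on U_A, every vertex other than x is adjacent to x or to y but not both, x and y are adjacent, the neighbors of x in U_A \ {y} are pairwise nonadjacent, and the neighbors of y in U_A \ {x} are pairwise nonadjacent; i.e., the induced subgraph on U_A is bipartite of the 'double star' form: U_A = {x} ∪ (N_{U_A}(y)\{x}) ∪ {y} ∪ (N_{U_A}(x)\{y}) with N(x) ∩ U_A and N(y) ∩ U_A as the two sides. -/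

lemma no_triangle {V : Type*} {G : SimpleGraph V} (hG : G.CliqueFree 3)
    {a b c : V} (hab : G.Adj a b) (hac : G.Adj a c) (hbc : G.Adj b c) : False := by
  classical
  exact hG {a, b, c} (SimpleGraph.is3Clique_triple_iff.mpr ⟨hab, hac, hbc⟩)

/-- Let `G` be triangle-free, `x` and `y` adjacent, `U = N_G[x] ∪ N_G[y]`, `A`
a maximal independent set of `G \ U`, and `U_A = {v ∈ U : N_G(v) ∩ A = ∅}`.
Then the induced subgraph on `U_A` is a "double star": `x` and `y` are
adjacent, every vertex of `U_A` other than `x, y` is adjacent to exactly one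
of `x, y`, and the neighbors of `x` (other than `y`) in `U_A` are pairwise
nonadjacent, as are the neighbors of `y` (other than `x`). -/
theorem UA_double_star
    {V : Type*} [Fintype V] (G : SimpleGraph V)
    (hG : G.CliqueFree 3) (x y : V) (hxy : G.Adj x y) (A : Set V)
    (hA : IsMaxIndepOn G (closedNbhd G x ∪ closedNbhd G y)ᶜ A) :
    G.Adj x y ∧
    (∀ v ∈ {v ∈ closedNbhd G x ∪ closedNbhd G y | G.neighborSet v ∩ A = ∅},
      v ≠ x → v ≠ y →
        (G.Adj v x ∨ G.Adj v y) ∧ ¬ (G.Adj v x ∧ G.Adj v y)) ∧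
    (∀ u ∈ {v ∈ closedNbhd G x ∪ closedNbhd G y | G.neighborSet v ∩ A = ∅},
      ∀ v ∈ {v ∈ closedNbhd G x ∪ closedNbhd G y | G.neighborSet v ∩ A = ∅},
        u ≠ y → v ≠ y → G.Adj u x → G.Adj v x → ¬ G.Adj u v) ∧
    (∀ u ∈ {v ∈ closedNbhd G x ∪ closedNbhd G y | G.neighborSet v ∩ A = ∅},
      ∀ v ∈ {v ∈ closedNbhd G x ∪ closedNbhd G y | G.neighborSet v ∩ A = ∅},
        u ≠ x → v ≠ x → G.Adj u y → G.Adj v y → ¬ G.Adj u v) := by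
  refine ⟨hxy, ?_, ?_, ?_⟩
  · rintro v ⟨hvU, -⟩ hvx hvy
    have hor : G.Adj v x ∨ G.Adj v y := by
      rcases hvU with h | h
      · rcases h with h | h
        · exact absurd h hvx
        · exact Or.inl (h.symm)
      · rcases h with h | h
        · exact absurd h hvy
        · exact Or.inr (h.symm)
    refine ⟨hor, fun ⟨h1, h2⟩ => no_triangle hG h1 h2 hxy⟩
  · rintro u - v - huy hvy hux hvx huv
    rcases eq_or_ne u v with rfl | hne
    · exact G.irrefl huv
    · exact no_triangle hG hux huv (hvx.symm)
  · rintro u - v - hux hvx huy hvy huv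
    rcases eq_or_ne u v with rfl | hne
    · exact G.irrefl huv
    · exact no_triangle hG huy huv (hvy.symm)
end
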